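/- Let G and K be finitely generated groups. Then corank(G) ≤ corank(G * ℤ), and more specifically corank(G * ℤ) = corank(G) + 1. -/

import Mathlib

open Function Module Submodule

set_option maxHeartbeats 1000000

/-- The corank of a group `G`: the largest `r` such that there is an epimorphism of `G`
onto the free group of rank `r`. -/
noncomputable def corank (G : Type*) [Group G] : ℕ :=
  sSup {r : ℕ | ∃ φ : G →* FreeGroup (Fin r), Function.Surjective φ}

namespace CorankAux

/-- A hom to a free group is surjective if all generators are in the range. -/
lemma surj_of_gens_mem {H : Type*} [Group H] {β : Type*} (ψ : H →* FreeGroup β)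
    (h : ∀ b, FreeGroup.of b ∈ ψ.range) : Function.Surjective ψ := by
  rw [← MonoidHom.range_eq_top, ← top_le_iff, ← FreeGroup.closure_range_of β,
    Subgroup.closure_le]
  rintro x ⟨b, rfl⟩
  exact h b

/-- An injection `β ↪ α` induces a surjection `FreeGroup α ↠ FreeGroup β`. -/
lemma exists_freeGroup_surj {β α : Type*} (e : β ↪ α) :
    ∃ π : FreeGroup α →* FreeGroup β, Function.Surjective π := by
  classical
  refine ⟨FreeGroup.lift fun a => if h : ∃ b, e b = a then FreeGroup.of h.choose else 1, ?_⟩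
  apply surj_of_gens_mem
  intro b
  refine ⟨FreeGroup.of (e b), ?_⟩
  have h : ∃ b', e b' = e b := ⟨b, rfl⟩
  simp only [FreeGroup.lift_apply_of, dif_pos h]
  congr 1
  exact e.injective h.choose_spec

variable {G : Type*} [Group G]

lemma mem_mono {k r : ℕ} (hkr : k ≤ r)
    (h : ∃ φ : G →* FreeGroup (Fin r), Function.Surjective φ) :
    ∃ φ : G →* FreeGroup (Fin k), Function.Surjective φ := by
  obtain ⟨φ, hφ⟩ := h
  obtain ⟨π, hπ⟩ := exists_freeGroup_surj (Fin.castLEEmb hkr)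
  exact ⟨π.comp φ, hπ.comp hφ⟩

lemma zero_mem : ∃ φ : G →* FreeGroup (Fin 0), Function.Surjective φ := by
  refine ⟨1, fun y => ⟨1, ?_⟩⟩
  have : ∀ y : FreeGroup (Fin 0), y = 1 := by
    intro y
    induction y using FreeGroup.induction_on with
    | C1 => rfl
    | of x => exact x.elim0
    | inv_of x _ => exact x.elim0
    | mul x y hx hy => rw [hx, hy, one_mul]
  rw [this y]; rfl

/-- abelianization-style hom to `ℚ^s`. -/
noncomputable def ab (s : ℕ) : FreeGroup (Fin s) →* Multiplicative (Fin s → ℚ) :=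
  FreeGroup.lift fun i => Multiplicative.ofAdd (Pi.single i 1)

lemma ab_of {s : ℕ} (i : Fin s) :
    Multiplicative.toAdd (ab s (FreeGroup.of i)) = Pi.single i 1 := by
  simp [ab]

/-- If `T` generates `Γ`, the image of any element under a hom to a `ℚ`-vector space
lies in the span of the image of `T`. -/
lemma toAdd_mem_span {Γ V : Type*} [Group Γ] [AddCommGroup V] [Module ℚ V]
    (ρ : Γ →* Multiplicative V) {T : Set Γ} (hT : Subgroup.closure T = ⊤) (x : Γ) :
    Multiplicative.toAdd (ρ x) ∈ span ℚ ((fun g => Multiplicative.toAdd (ρ g)) '' T) := by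
  have hle : Subgroup.closure T ≤ Subgroup.comap ρ
      (AddSubgroup.toSubgroup (span ℚ ((fun g => Multiplicative.toAdd (ρ g)) '' T)).toAddSubgroup) := by
    rw [Subgroup.closure_le]
    intro t ht
    exact subset_span ⟨t, ht, rfl⟩
  exact hle (hT ▸ Subgroup.mem_top x)

lemma span_singles_top {s : ℕ} {W : Submodule ℚ (Fin s → ℚ)}
    (h : ∀ i : Fin s, Pi.single i (1 : ℚ) ∈ W) : W = ⊤ := by
  rw [eq_top_iff, ← (Pi.basisFun ℚ (Fin s)).span_eq, span_le]
  rintro x ⟨i, rfl⟩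
  simpa [Pi.basisFun_apply] using h i

/-- Boundedness of the corank set for f.g. groups. -/
lemma bddAbove_set [Group.FG G] :
    BddAbove {r : ℕ | ∃ φ : G →* FreeGroup (Fin r), Function.Surjective φ} := by
  classical
  obtain ⟨T, hTc, hTf⟩ := Group.fg_iff.mp ‹Group.FG G›
  refine ⟨hTf.toFinset.card, ?_⟩
  rintro r ⟨φ, hφ⟩
  set ρ : G →* Multiplicative (Fin r → ℚ) := (ab r).comp φ with hρ
  set f : G → (Fin r → ℚ) := fun g => Multiplicative.toAdd (ρ g) with hf
  have hsingle : ∀ i : Fin r, Pi.single i (1 : ℚ) ∈ span ℚ (f '' T) := by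
    intro i
    obtain ⟨g, hg⟩ := hφ (FreeGroup.of i)
    have := toAdd_mem_span ρ hTc g
    rwa [hρ, MonoidHom.comp_apply, hg, ab_of] at this
  have htop : span ℚ (f '' T) = ⊤ := span_singles_top fun i => hsingle i
  have h1 : f '' T = ↑(hTf.toFinset.image f) := by
    simp [Finset.coe_image]
  have h2 : finrank ℚ (span ℚ (f '' T) : Submodule ℚ (Fin r → ℚ)) ≤ hTf.toFinset.card := by
    rw [h1]
    refine le_trans (finrank_span_le_card _) ?_
    rw [Finset.toFinset_coe]
    exact Finset.card_image_le
  have h3 : finrank ℚ (span ℚ (f '' T) : Submodule ℚ (Fin r → ℚ)) = r := by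
    rw [htop, finrank_top, Module.finrank_fin_fun]
  omega

lemma isFreeGroup_closure_range_of (H : Type*) [Group H] [IsFreeGroup H] :
    Subgroup.closure (Set.range (IsFreeGroup.of : IsFreeGroup.Generators H → H)) = ⊤ := by
  have h1 : Set.range (IsFreeGroup.of : IsFreeGroup.Generators H → H)
      = ((IsFreeGroup.mulEquiv H : FreeGroup (IsFreeGroup.Generators H) →* H)) '' (Set.range (FreeGroup.of)) := by
    rw [← Set.range_comp]
    rfl
  rw [h1, ← MonoidHom.map_closure (IsFreeGroup.mulEquiv H : FreeGroup (IsFreeGroup.Generators H) →* H),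
    FreeGroup.closure_range_of]
  rw [← MonoidHom.range_eq_map]
  exact MonoidHom.range_eq_top.mpr fun x => ⟨(IsFreeGroup.mulEquiv H).symm x, by simp⟩

open Monoid in
/-- In `Multiplicative ℤ`, every element is a power of `ofAdd 1`. -/
lemma multInt_eq_pow (x : Multiplicative ℤ) :
    x = (Multiplicative.ofAdd (1 : ℤ)) ^ (Multiplicative.toAdd x) := by
  apply Multiplicative.toAdd.injective
  simp [← ofAdd_zsmul]

open Monoid in
lemma coprod_fg [Group.FG G] : Group.FG (Coprod G (Multiplicative ℤ)) := by
  obtain ⟨T, hTc, hTf⟩ := Group.fg_iff.mp ‹Group.FG G›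
  rw [Group.fg_iff]
  refine ⟨(Coprod.inl '' T) ∪ {Coprod.inr (Multiplicative.ofAdd (1 : ℤ))}, ?_,
    (hTf.image _).union (Set.finite_singleton _)⟩
  rw [eq_top_iff, ← Coprod.range_inl_sup_range_inr, sup_le_iff]
  constructor
  · rintro x ⟨g, rfl⟩
    have : (Coprod.inl g : Coprod G (Multiplicative ℤ)) ∈
        Subgroup.map (Coprod.inl : G →* Coprod G (Multiplicative ℤ)) (Subgroup.closure T) :=
      Subgroup.mem_map_of_mem _ (by rw [hTc]; trivial)
    rw [MonoidHom.map_closure] at this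
    exact Subgroup.closure_mono Set.subset_union_left this
  · rintro x ⟨y, rfl⟩
    rw [multInt_eq_pow y, map_zpow]
    refine zpow_mem (Subgroup.subset_closure ?_) _
    exact Set.mem_union_right _ rfl

open Monoid in
/-- The easy inclusion: `r ∈ S(G)` implies `r+1 ∈ S(G * ℤ)`. -/
lemma mem_succ_of_mem {r : ℕ} (h : ∃ φ : G →* FreeGroup (Fin r), Function.Surjective φ) :
    ∃ φ : Coprod G (Multiplicative ℤ) →* FreeGroup (Fin (r + 1)), Function.Surjective φ := by
  obtain ⟨φ, hφ⟩ := h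
  set emb : FreeGroup (Fin r) →* FreeGroup (Fin (r + 1)) := FreeGroup.map Fin.castSucc with hemb
  set j : Multiplicative ℤ →* FreeGroup (Fin (r + 1)) :=
    zpowersHom _ (FreeGroup.of (Fin.last r)) with hj
  refine ⟨Coprod.lift (emb.comp φ) j, surj_of_gens_mem _ ?_⟩
  intro i
  induction i using Fin.lastCases with
  | last =>
      refine ⟨Coprod.inr (Multiplicative.ofAdd (1 : ℤ)), ?_⟩
      rw [Coprod.lift_apply_inr]
      simp [hj]
  | cast i =>
      obtain ⟨g, hg⟩ := hφ (FreeGroup.of i)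
      refine ⟨Coprod.inl g, ?_⟩
      rw [Coprod.lift_apply_inl, MonoidHom.comp_apply, hg, hemb]
      exact FreeGroup.map.of

open Monoid in
/-- The hard inclusion: `r+1 ∈ S(G * ℤ)` implies `r ∈ S(G)`, via Nielsen-Schreier. -/
lemma mem_of_succ_mem {r : ℕ}
    (h : ∃ φ : Coprod G (Multiplicative ℤ) →* FreeGroup (Fin (r + 1)), Function.Surjective φ) :
    ∃ φ : G →* FreeGroup (Fin r), Function.Surjective φ := by
  classical
  obtain ⟨φ, hφ⟩ := h
  set t : FreeGroup (Fin (r + 1)) := φ (Coprod.inr (Multiplicative.ofAdd (1 : ℤ))) with ht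
  set H : Subgroup (FreeGroup (Fin (r + 1))) := (φ.comp Coprod.inl).range with hH
  have hclos : Subgroup.closure ((H : Set (FreeGroup (Fin (r + 1)))) ∪ {t}) = ⊤ := by
    rw [eq_top_iff]
    calc (⊤ : Subgroup (FreeGroup (Fin (r + 1))))
        = Subgroup.map φ ⊤ := by
          rw [← MonoidHom.range_eq_map, MonoidHom.range_eq_top.mpr hφ]
      _ = Subgroup.map φ ((Coprod.inl : G →* _).range ⊔ (Coprod.inr : Multiplicative ℤ →* _).range) := by
          rw [Coprod.range_inl_sup_range_inr]
      _ ≤ Subgroup.closure ((H : Set (FreeGroup (Fin (r + 1)))) ∪ {t}) := by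
          rw [Subgroup.map_sup]
          refine sup_le ?_ ?_
          · rintro x ⟨y, ⟨g, rfl⟩, rfl⟩
            exact Subgroup.subset_closure (Set.mem_union_left _ ⟨g, rfl⟩)
          · rintro x ⟨y, ⟨z, rfl⟩, rfl⟩
            rw [multInt_eq_pow z, map_zpow, map_zpow]
            refine Subgroup.zpow_mem _ ?_ _
            apply Subgroup.subset_closure
            right
            rfl
  set ψ := ab (r + 1) with hψ
  set f : FreeGroup (Fin (r + 1)) → (Fin (r + 1) → ℚ) := fun x => Multiplicative.toAdd (ψ x)
    with hf
  set U : Submodule ℚ (Fin (r + 1) → ℚ) :=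
    span ℚ (Set.range fun x : IsFreeGroup.Generators H =>
      f ((IsFreeGroup.of x : H) : FreeGroup (Fin (r + 1)))) with hU
  have hUmem : ∀ g : FreeGroup (Fin (r + 1)), g ∈ H → f g ∈ U := by
    intro g hg
    have h1 := toAdd_mem_span (ψ.comp H.subtype) (isFreeGroup_closure_range_of H)
      (⟨g, hg⟩ : H)
    refine span_mono ?_ h1
    rw [← Set.range_comp]
    rintro v ⟨x, rfl⟩
    exact ⟨x, rfl⟩
  have hsingle : ∀ i : Fin (r + 1), Pi.single i (1 : ℚ) ∈ U ⊔ span ℚ {f t} := by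
    intro i
    have h1 := toAdd_mem_span ψ hclos (FreeGroup.of i)
    rw [hψ, ab_of] at h1
    refine span_le.mpr ?_ h1
    rintro v ⟨g, hg, rfl⟩
    rcases hg with hg | hg
    · exact Submodule.mem_sup_left (hUmem g hg)
    · rw [Set.mem_singleton_iff] at hg
      rw [hg]
      exact Submodule.mem_sup_right (subset_span rfl)
  have htop : U ⊔ span ℚ {f t} = ⊤ := span_singles_top hsingle
  have hr : r ≤ finrank ℚ U := by
    have h1 : finrank ℚ (U ⊔ span ℚ {f t} : Submodule ℚ (Fin (r + 1) → ℚ)) ≤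
        finrank ℚ U + 1 := by
      refine le_trans (Submodule.finrank_add_le_finrank_add_finrank _ _) ?_
      have h2 : finrank ℚ (span ℚ {f t} : Submodule ℚ (Fin (r + 1) → ℚ)) ≤ 1 := by
        refine le_trans (finrank_span_le_card _) ?_
        simp
      omega
    rw [htop, finrank_top, Module.finrank_fin_fun] at h1
    omega
  have hemb : Nonempty (Fin r ↪ IsFreeGroup.Generators H) := by
    cases finite_or_infinite (IsFreeGroup.Generators H) with
    | inl hfin =>
        haveI := Fintype.ofFinite (IsFreeGroup.Generators H)
        refine Function.Embedding.nonempty_of_card_le ?_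
        rw [Fintype.card_fin]
        have h3 : finrank ℚ U ≤ Fintype.card (IsFreeGroup.Generators H) := by
          rw [hU]
          refine le_trans (finrank_span_le_card _) ?_
          rw [Set.toFinset_range]
          exact le_trans Finset.card_image_le (by simp)
        omega
    | inr hinf => exact ⟨(Fin.valEmbedding).trans (Infinite.natEmbedding _)⟩
  obtain ⟨e⟩ := hemb
  set q : H →* FreeGroup (Fin r) :=
    IsFreeGroup.lift (fun x => if h : ∃ i, e i = x then FreeGroup.of h.choose else 1) with hq
  have hqs : Function.Surjective q := by
    apply surj_of_gens_mem
    intro i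
    refine ⟨IsFreeGroup.of (e i), ?_⟩
    have hex : ∃ i', e i' = e i := ⟨i, rfl⟩
    rw [hq, IsFreeGroup.lift_of]
    simp only [dif_pos hex]
    congr 1
    exact e.injective hex.choose_spec
  exact ⟨q.comp (φ.comp Coprod.inl).rangeRestrict,
    hqs.comp (φ.comp Coprod.inl).rangeRestrict_surjective⟩

end CorankAux

theorem corank_coprod_int (G : Type*) [Group G] [Group.FG G] :
    corank G ≤ corank (Monoid.Coprod G (Multiplicative ℤ)) ∧
    corank (Monoid.Coprod G (Multiplicative ℤ)) = corank G + 1 := by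
  haveI : Group.FG (Monoid.Coprod G (Multiplicative ℤ)) := CorankAux.coprod_fg
  have hb1 := CorankAux.bddAbove_set (G := G)
  have hb2 := CorankAux.bddAbove_set (G := Monoid.Coprod G (Multiplicative ℤ))
  have h1 : corank G ∈ {r : ℕ | ∃ φ : G →* FreeGroup (Fin r), Function.Surjective φ} :=
    Nat.sSup_mem ⟨0, CorankAux.zero_mem⟩ hb1
  have h2 : corank (Monoid.Coprod G (Multiplicative ℤ)) ∈
      {r : ℕ | ∃ φ : Monoid.Coprod G (Multiplicative ℤ) →* FreeGroup (Fin r),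
        Function.Surjective φ} :=
    Nat.sSup_mem ⟨0, CorankAux.zero_mem⟩ hb2
  have hup := CorankAux.mem_succ_of_mem h1
  have le1 : corank G + 1 ≤ corank (Monoid.Coprod G (Multiplicative ℤ)) := le_csSup hb2 hup
  have hpos : 1 ≤ corank (Monoid.Coprod G (Multiplicative ℤ)) := le_trans (by omega) le1
  have h2' : ∃ φ : Monoid.Coprod G (Multiplicative ℤ) →*
      FreeGroup (Fin (corank (Monoid.Coprod G (Multiplicative ℤ)) - 1 + 1)),
      Function.Surjective φ := by
    rw [Nat.sub_add_cancel hpos]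
    exact h2
  have hdown := CorankAux.mem_of_succ_mem h2'
  have le2 : corank (Monoid.Coprod G (Multiplicative ℤ)) - 1 ≤ corank G := le_csSup hb1 hdown
  refine ⟨by omega, ?_⟩
  have le2 : corank (Monoid.Coprod G (Multiplicative ℤ)) - 1 ≤ corank G := le_csSup hb1 (CorankAux.mem_of_succ_mem h2')
  omega
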